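/- Let h and g be proper convex lower semicontinuous functions on ℝⁿ with 0 in the relative interior of dom g − dom h. Then inf_x h(x) + g(x) = −min_w h*(−w) + g*(w), where h* and g* denote the Fenchel–Legendre conjugates; moreover if x* and w* are solutions of the primal and dual problems respectively, then x* ∈ ∂h*(−w*) and w* ∈ ∂g(x*). -/

import Mathlib

open Matrix Pointwise

/-- Fenchel–Legendre conjugate of an extended-real-valued function on `ℝⁿ`. -/
noncomputable def fenchelConj {n : ℕ} (f : (Fin n → ℝ) → EReal) (w : Fin n → ℝ) : EReal :=
  ⨆ x : Fin n → ℝ, ((w ⬝ᵥ x : ℝ) : EReal) - f x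

/-- `f` is proper: nowhere `−∞` and not identically `+∞`. -/
def ProperFn {n : ℕ} (f : (Fin n → ℝ) → EReal) : Prop :=
  (∀ x, f x ≠ ⊥) ∧ ∃ x, f x ≠ ⊤

/-- Convexity for extended-real-valued functions. -/
def ConvexFn {n : ℕ} (f : (Fin n → ℝ) → EReal) : Prop :=
  ∀ x y : Fin n → ℝ, ∀ a b : ℝ, 0 ≤ a → 0 ≤ b → a + b = 1 →
    f (a • x + b • y) ≤ (a : EReal) * f x + (b : EReal) * f y

/-- Effective domain. -/
def domFn {n : ℕ} (f : (Fin n → ℝ) → EReal) : Set (Fin n → ℝ) := {x | f x ≠ ⊤}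

/-- Convex subdifferential of an extended-real-valued function. -/
def subdiffFn {n : ℕ} (f : (Fin n → ℝ) → EReal) (x : Fin n → ℝ) : Set (Fin n → ℝ) :=
  {w | ∀ y, f x + ((w ⬝ᵥ (y - x) : ℝ) : EReal) ≤ f y}

set_option maxHeartbeats 1000000

section helpers
lemma ereal_eq_bot_of_forall_le (x : EReal) (hx : ∀ r : ℝ, x ≤ (r : EReal)) : x = ⊥ := by
  by_contra hne
  rcases EReal.exists_between_coe_real (Ne.bot_lt hne) with ⟨r, hr1, hr2⟩
  exact absurd (hx r) (not_le.2 hr2)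

lemma ereal_le_coe_of_forall_eps (x : EReal) (c : ℝ)
    (hx : ∀ ε : ℝ, 0 < ε → x ≤ ((c + ε : ℝ) : EReal)) : x ≤ (c : EReal) := by
  by_contra hne
  rcases EReal.exists_between_coe_real (not_le.1 hne) with ⟨r, hr1, hr2⟩
  have hcr : c < r := by exact_mod_cast hr1
  have := hx ((r - c) / 2) (by linarith)
  have : x ≤ ((c + (r - c) / 2 : ℝ) : EReal) := this
  have hlt : ((c + (r - c) / 2 : ℝ) : EReal) < (r : EReal) := by
    exact_mod_cast (by linarith : c + (r - c) / 2 < r)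
  exact absurd (this.trans_lt hlt) (not_lt.2 hr2.le)

lemma real_le_of_forall_eps {a b : ℝ} (hx : ∀ ε : ℝ, 0 < ε → a ≤ b + ε) : a ≤ b := by
  by_contra hne
  have := hx ((a - b) / 2) (by linarith [not_le.1 hne])
  linarith [not_le.1 hne]

lemma ereal_mul_ne_bot_of_pos {a : ℝ} (ha : 0 < a) {p : EReal} (hp : p ≠ ⊥) :
    (a : EReal) * p ≠ ⊥ := by
  induction p using EReal.rec with
  | bot => exact absurd rfl hp
  | coe r => rw [← EReal.coe_mul]; exact EReal.coe_ne_bot _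
  | top => rw [EReal.mul_top_of_pos (by exact_mod_cast ha)]; exact top_ne_bot

lemma ereal_mul_distrib {a : ℝ} (ha : 0 ≤ a) {p q : EReal} (hp : p ≠ ⊥) (hq : q ≠ ⊥) :
    (a : EReal) * (p + q) = (a : EReal) * p + (a : EReal) * q := by
  rcases eq_or_lt_of_le ha with h0 | hpos
  · simp [← h0, EReal.zero_mul]
  have hac : (0 : EReal) < (a : EReal) := by exact_mod_cast hpos
  induction p using EReal.rec with
  | bot => exact absurd rfl hp
  | top =>
      rw [EReal.top_add_of_ne_bot hq, EReal.mul_top_of_pos hac,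
        EReal.top_add_of_ne_bot (ereal_mul_ne_bot_of_pos hpos hq)]
  | coe r =>
      induction q using EReal.rec with
      | bot => exact absurd rfl hq
      | top =>
          rw [EReal.add_top_of_ne_bot (EReal.coe_ne_bot r), EReal.mul_top_of_pos hac,
            ← EReal.coe_mul,
            EReal.add_top_of_ne_bot (EReal.coe_ne_bot _)]
      | coe s =>
          rw [← EReal.coe_add, ← EReal.coe_mul, ← EReal.coe_mul, ← EReal.coe_mul,
            ← EReal.coe_add, mul_add]
end helpers

noncomputable def vfun {n : ℕ} (h g : (Fin n → ℝ) → EReal) (u : Fin n → ℝ) : EReal :=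
  ⨅ x : Fin n → ℝ, h x + g (x + u)

section vbasic
variable {n : ℕ} {h g : (Fin n → ℝ) → EReal}

lemma sum_ne_bot (hproper : ProperFn h) (gproper : ProperFn g) (x y : Fin n → ℝ) :
    h x + g y ≠ ⊥ :=
  fun hb => by rcases EReal.add_eq_bot_iff.1 hb with h1 | h1
               exacts [hproper.1 x h1, gproper.1 y h1]

lemma domFn_convex (fconv : ConvexFn g) (fproper : ProperFn g) : Convex ℝ (domFn g) := by
  intro x hx y hy a b ha hb hab
  have hx' := fproper.1 x
  have hy' := fproper.1 y
  lift g x to ℝ using ⟨hx, hx'⟩ with rx hrx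
  lift g y to ℝ using ⟨hy, hy'⟩ with ry hry
  have := fconv x y a b ha hb hab
  rw [← hrx, ← hry, ← EReal.coe_mul, ← EReal.coe_mul, ← EReal.coe_add] at this
  exact ne_top_of_le_ne_top (EReal.coe_ne_top _) this

lemma v_ne_top_iff (hproper : ProperFn h) (gproper : ProperFn g) (u : Fin n → ℝ) :
    vfun h g u ≠ ⊤ ↔ u ∈ domFn g - domFn h := by
  rw [vfun, Ne, iInf_eq_top, not_forall]
  constructor
  · rintro ⟨x, hx⟩
    have hh : h x ≠ ⊤ := fun ht => hx (by rw [ht, EReal.top_add_of_ne_bot (gproper.1 _)])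
    have hg : g (x + u) ≠ ⊤ := fun ht => hx (by rw [ht, EReal.add_top_of_ne_bot (hproper.1 _)])
    exact ⟨x + u, hg, x, hh, add_sub_cancel_left x u⟩
  · rintro ⟨y, hy, x, hx, rfl⟩
    refine ⟨x, ?_⟩
    have hxy : x + (y - x) = y := by abel
    rw [hxy]
    lift h x to ℝ using ⟨hx, hproper.1 x⟩ with rx
    lift g y to ℝ using ⟨hy, gproper.1 y⟩ with ry
    rw [← EReal.coe_add]; exact EReal.coe_ne_top _

lemma v_zero : vfun h g 0 = ⨅ x : Fin n → ℝ, h x + g x := by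
  simp [vfun]

lemma conj_term_le (f : (Fin n → ℝ) → EReal) (w x : Fin n → ℝ) :
    ((w ⬝ᵥ x : ℝ) : EReal) - f x ≤ fenchelConj f w :=
  le_iSup (fun x => ((w ⬝ᵥ x : ℝ) : EReal) - f x) x

lemma conj_ne_bot (fproper : ProperFn g) (w : Fin n → ℝ) : fenchelConj g w ≠ ⊥ := by
  obtain ⟨x₀, hx₀⟩ := fproper.2
  have h1 : ((w ⬝ᵥ x₀ : ℝ) : EReal) - g x₀ ≤ fenchelConj g w := conj_term_le _ _ _
  lift g x₀ to ℝ using ⟨hx₀, fproper.1 x₀⟩ with r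
  intro hb
  rw [hb, le_bot_iff, ← EReal.coe_sub] at h1
  exact EReal.coe_ne_bot _ h1

lemma weak_duality (hproper : ProperFn h) (gproper : ProperFn g) (w : Fin n → ℝ) :
    - (⨅ x : Fin n → ℝ, h x + g x) ≤ fenchelConj h (-w) + fenchelConj g w := by
  rw [EReal.neg_le]
  refine le_iInf fun x => ?_
  rw [EReal.neg_le]
  by_cases hh : h x = ⊤
  · rw [hh, EReal.top_add_of_ne_bot (gproper.1 x)]; simp
  by_cases hg : g x = ⊤
  · rw [hg, EReal.add_top_of_ne_bot (hproper.1 x)]; simp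
  have h1 : (((-w) ⬝ᵥ x : ℝ) : EReal) - h x ≤ fenchelConj h (-w) := conj_term_le _ _ _
  have h2 : ((w ⬝ᵥ x : ℝ) : EReal) - g x ≤ fenchelConj g w := conj_term_le _ _ _
  lift h x to ℝ using ⟨hh, hproper.1 x⟩ with rh
  lift g x to ℝ using ⟨hg, gproper.1 x⟩ with rg
  have h3 := add_le_add h1 h2
  refine le_trans (le_of_eq ?_) h3
  rw [← EReal.coe_sub, ← EReal.coe_sub, ← EReal.coe_add, ← EReal.coe_add, ← EReal.coe_neg]
  norm_cast
  rw [neg_dotProduct]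
  ring
end vbasic

section jensen
variable {n : ℕ} {h g : (Fin n → ℝ) → EReal}

lemma v_jensen_term (hproper : ProperFn h) (gproper : ProperFn g)
    (hconv : ConvexFn h) (gconv : ConvexFn g)
    (a b : ℝ) (ha : 0 ≤ a) (hb : 0 ≤ b) (hab : a + b = 1) (u₁ u₂ x₁ x₂ : Fin n → ℝ) :
    vfun h g (a • u₁ + b • u₂)
      ≤ (a : EReal) * (h x₁ + g (x₁ + u₁)) + (b : EReal) * (h x₂ + g (x₂ + u₂)) := by
  have key : vfun h g (a • u₁ + b • u₂)
      ≤ h (a • x₁ + b • x₂) + g (a • x₁ + b • x₂ + (a • u₁ + b • u₂)) :=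
    iInf_le _ _
  have heq : a • x₁ + b • x₂ + (a • u₁ + b • u₂) = a • (x₁ + u₁) + b • (x₂ + u₂) := by
    module
  rw [heq] at key
  refine key.trans ?_
  have h1 := hconv x₁ x₂ a b ha hb hab
  have h2 := gconv (x₁ + u₁) (x₂ + u₂) a b ha hb hab
  refine (add_le_add h1 h2).trans (le_of_eq ?_)
  rw [add_add_add_comm, ← ereal_mul_distrib ha (hproper.1 x₁) (gproper.1 _),
    ← ereal_mul_distrib hb (hproper.1 x₂) (gproper.1 _)]

lemma v_bot_propagate (hproper : ProperFn h) (gproper : ProperFn g)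
    (hconv : ConvexFn h) (gconv : ConvexFn g)
    {u₁ u₂ : Fin n → ℝ} (hu₁ : vfun h g u₁ = ⊥) (hu₂ : vfun h g u₂ ≠ ⊤)
    {a b : ℝ} (ha : 0 < a) (hb : 0 ≤ b) (hab : a + b = 1) :
    vfun h g (a • u₁ + b • u₂) = ⊥ := by
  apply ereal_eq_bot_of_forall_le
  intro r
  obtain ⟨x₂, hx₂⟩ : ∃ x₂, h x₂ + g (x₂ + u₂) ≠ ⊤ := by
    rw [vfun] at hu₂; rw [← not_forall, ← iInf_eq_top]; exact hu₂
  have hx₂b := sum_ne_bot hproper gproper x₂ (x₂ + u₂)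
  lift h x₂ + g (x₂ + u₂) to ℝ using ⟨hx₂, hx₂b⟩ with r₂ hr₂
  set L : ℝ := (r - b * r₂) / a with hL
  obtain ⟨x₁, hx₁⟩ : ∃ x₁, h x₁ + g (x₁ + u₁) < (L : EReal) := by
    rw [← iInf_lt_iff, ← vfun, hu₁]; exact bot_lt_iff_ne_bot.2 (EReal.coe_ne_bot L)
  have hx₁b := sum_ne_bot hproper gproper x₁ (x₁ + u₁)
  have hx₁t : h x₁ + g (x₁ + u₁) ≠ ⊤ := ne_top_of_lt hx₁
  lift h x₁ + g (x₁ + u₁) to ℝ using ⟨hx₁t, hx₁b⟩ with r₁ hr₁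
  have key := v_jensen_term hproper gproper hconv gconv a b ha.le hb hab u₁ u₂ x₁ x₂
  rw [← hr₁, ← hr₂, ← EReal.coe_mul, ← EReal.coe_mul, ← EReal.coe_add] at key
  refine key.trans ?_
  have hr₁L : r₁ < L := by exact_mod_cast hx₁
  have : a * r₁ + b * r₂ ≤ r := by
    have : a * L = r - b * r₂ := by
      show a * ((r - b * r₂) / a) = r - b * r₂
      field_simp
    nlinarith
  exact_mod_cast this

lemma v_jensen_real (hproper : ProperFn h) (gproper : ProperFn g)
    (hconv : ConvexFn h) (gconv : ConvexFn g)
    {u₁ u₂ : Fin n → ℝ} (h₁t : vfun h g u₁ ≠ ⊤) (h₁b : vfun h g u₁ ≠ ⊥)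
    (h₂t : vfun h g u₂ ≠ ⊤) (h₂b : vfun h g u₂ ≠ ⊥)
    {a b : ℝ} (ha : 0 ≤ a) (hb : 0 ≤ b) (hab : a + b = 1) :
    vfun h g (a • u₁ + b • u₂)
      ≤ ((a * (vfun h g u₁).toReal + b * (vfun h g u₂).toReal : ℝ) : EReal) := by
  set r₁ := (vfun h g u₁).toReal with hr₁def
  set r₂ := (vfun h g u₂).toReal with hr₂def
  have hv₁ : vfun h g u₁ = (r₁ : EReal) := (EReal.coe_toReal h₁t h₁b).symm
  have hv₂ : vfun h g u₂ = (r₂ : EReal) := (EReal.coe_toReal h₂t h₂b).symm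
  apply ereal_le_coe_of_forall_eps
  intro ε hε
  obtain ⟨x₁, hx₁⟩ : ∃ x₁, h x₁ + g (x₁ + u₁) < ((r₁ + ε : ℝ) : EReal) := by
    rw [← iInf_lt_iff, ← vfun, hv₁]; exact_mod_cast lt_add_of_pos_right r₁ hε
  obtain ⟨x₂, hx₂⟩ : ∃ x₂, h x₂ + g (x₂ + u₂) < ((r₂ + ε : ℝ) : EReal) := by
    rw [← iInf_lt_iff, ← vfun, hv₂]; exact_mod_cast lt_add_of_pos_right r₂ hε
  have hx₁b := sum_ne_bot hproper gproper x₁ (x₁ + u₁)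
  have hx₂b := sum_ne_bot hproper gproper x₂ (x₂ + u₂)
  lift h x₁ + g (x₁ + u₁) to ℝ using ⟨ne_top_of_lt hx₁, hx₁b⟩ with s₁ hs₁
  lift h x₂ + g (x₂ + u₂) to ℝ using ⟨ne_top_of_lt hx₂, hx₂b⟩ with s₂ hs₂
  have key := v_jensen_term hproper gproper hconv gconv a b ha hb hab u₁ u₂ x₁ x₂
  rw [← hs₁, ← hs₂, ← EReal.coe_mul, ← EReal.coe_mul, ← EReal.coe_add] at key
  refine key.trans ?_
  have e₁ : s₁ < r₁ + ε := by exact_mod_cast hx₁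
  have e₂ : s₂ < r₂ + ε := by exact_mod_cast hx₂
  have : a * s₁ + b * s₂ ≤ a * r₁ + b * r₂ + ε := by nlinarith
  exact_mod_cast this
end jensen

section ri
variable {E : Type*} [NormedAddCommGroup E] [NormedSpace ℝ E]

lemma ball_subset_of_ri {S : Set E} (hS0 : (0:E) ∈ S)
    (hri : (0:E) ∈ intrinsicInterior ℝ S) :
    ∃ ε : ℝ, 0 < ε ∧ ∀ y : Submodule.span ℝ S, ‖y‖ < ε → (y : E) ∈ S := by
  have hins : insert (0:E) S = S := Set.insert_eq_self.2 hS0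
  have hspan : (affineSpan ℝ S : Set E) = (Submodule.span ℝ S : Set E) := by
    conv_lhs => rw [← hins]
    exact affineSpan_insert_zero (k := ℝ) S
  obtain ⟨z, hzint, hz0⟩ := hri
  have hmem : ∀ y : Submodule.span ℝ S, (y : E) ∈ affineSpan ℝ S := fun y => by
    rw [← SetLike.mem_coe, hspan]; exact y.2
  let j : Submodule.span ℝ S → affineSpan ℝ S := fun y => ⟨y.1, hmem y⟩
  have hj : Continuous j := Continuous.subtype_mk continuous_subtype_val _
  have hj0 : j 0 = z := Subtype.ext (by simp [j, hz0])
  have hopen : IsOpen (j ⁻¹' interior ((↑) ⁻¹' S)) := isOpen_interior.preimage hj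
  have h0mem : (0 : Submodule.span ℝ S) ∈ j ⁻¹' interior ((↑) ⁻¹' S) := by
    rw [Set.mem_preimage, hj0]; exact hzint
  obtain ⟨ε, hε, hball⟩ := Metric.isOpen_iff.1 hopen 0 h0mem
  refine ⟨ε, hε, fun y hy => ?_⟩
  have h1 : y ∈ Metric.ball 0 ε := by rwa [mem_ball_zero_iff]
  have h2 : j y ∈ interior ((↑) ⁻¹' S) := hball h1
  have h3 : j y ∈ ((↑) ⁻¹' S : Set (affineSpan ℝ S)) := interior_subset h2
  exact h3
end ri

section main
variable {n : ℕ} {h g : (Fin n → ℝ) → EReal}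

lemma exists_subgradient (hproper : ProperFn h) (gproper : ProperFn g)
    (hconv : ConvexFn h) (gconv : ConvexFn g)
    (hri : (0 : Fin n → ℝ) ∈ intrinsicInterior ℝ (domFn g - domFn h))
    (hv0b : vfun h g 0 ≠ ⊥) :
    ∃ w : Fin n → ℝ, ∀ u : Fin n → ℝ,
      vfun h g 0 + ((w ⬝ᵥ u : ℝ) : EReal) ≤ vfun h g u := by
  classical
  set S : Set (Fin n → ℝ) := domFn g - domFn h with hSdef
  have hS0 : (0 : Fin n → ℝ) ∈ S := intrinsicInterior_subset hri
  have hSconv : Convex ℝ S := (domFn_convex gconv gproper).sub (domFn_convex hconv hproper)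
  set M : Submodule ℝ (Fin n → ℝ) := Submodule.span ℝ S with hMdef
  obtain ⟨ε, hε, hball⟩ := ball_subset_of_ri hS0 hri
  have hvS : ∀ u, vfun h g u ≠ ⊤ ↔ u ∈ S := v_ne_top_iff hproper gproper
  have hv0t : vfun h g 0 ≠ ⊤ := (hvS 0).2 hS0
  -- v is nowhere ⊥
  have hvb : ∀ u, vfun h g u ≠ ⊥ := by
    intro u hu
    have huS : u ∈ S := (hvS u).1 (by rw [hu]; exact bot_ne_top)
    have huM : u ∈ M := Submodule.subset_span huS
    set δ : ℝ := ε / (2 * (‖u‖ + 1)) with hδdef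
    have hupos : (0:ℝ) < ‖u‖ + 1 := by positivity
    have hδ : 0 < δ := by positivity
    have htS : ((-δ) • u) ∈ S := by
      have hm : (-δ) • u ∈ M := M.smul_mem _ huM
      have : ‖((⟨(-δ) • u, hm⟩ : M))‖ < ε := by
        show ‖(-δ) • u‖ < ε
        rw [norm_smul]
        have h1 : ‖(-δ:ℝ)‖ = δ := by rw [norm_neg, Real.norm_eq_abs, abs_of_pos hδ]
        rw [h1, hδdef]
        rw [div_mul_eq_mul_div, div_lt_iff₀ (by positivity)]
        have : ‖u‖ < ‖u‖ + 1 := by linarith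
        nlinarith
      exact hball ⟨(-δ) • u, hm⟩ this
    have hvt : vfun h g ((-δ) • u) ≠ ⊤ := (hvS _).2 htS
    set a : ℝ := δ / (1 + δ) with hadef
    set b : ℝ := 1 / (1 + δ) with hbdef
    have hd1 : (0:ℝ) < 1 + δ := by linarith
    have ha : 0 < a := by positivity
    have hb : (0:ℝ) ≤ b := by positivity
    have hab : a + b = 1 := by
      rw [hadef, hbdef, ← add_div, div_eq_one_iff_eq hd1.ne']; ring
    have hcombo : a • u + b • ((-δ) • u) = (0 : Fin n → ℝ) := by
      rw [smul_smul, ← add_smul]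
      have : a + b * (-δ) = 0 := by
        rw [hadef, hbdef]; field_simp; ring
      rw [this, zero_smul]
    have := v_bot_propagate hproper gproper hconv gconv hu hvt ha hb hab
    rw [hcombo] at this
    exact hv0b this
  -- move to the subspace M
  set domV : Set M := {p : M | (p : Fin n → ℝ) ∈ S} with hdomVdef
  have hdomV_conv : Convex ℝ domV := hSconv.linear_preimage M.subtype
  have hball' : Metric.ball (0 : M) ε ⊆ domV := by
    intro p hp
    exact hball p (by rwa [mem_ball_zero_iff] at hp)
  have h0int : (0 : M) ∈ interior domV :=
    interior_maximal hball' Metric.isOpen_ball (Metric.mem_ball_self hε)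
  have h0domV : (0 : M) ∈ domV := interior_subset h0int
  set φ : M → ℝ := fun p => (vfun h g (p : Fin n → ℝ)).toReal with hφdef
  have hφle : ∀ p : M, p ∈ domV → ∀ q : M, q ∈ domV → ∀ a b : ℝ,
      0 ≤ a → 0 ≤ b → a + b = 1 → φ (a • p + b • q) ≤ a * φ p + b * φ q := by
    intro p hp q hq a b ha hb hab
    have hpt : vfun h g (p : Fin n → ℝ) ≠ ⊤ := (hvS _).2 hp
    have hqt : vfun h g (q : Fin n → ℝ) ≠ ⊤ := (hvS _).2 hq
    have key := v_jensen_real hproper gproper hconv gconv hpt (hvb _) hqt (hvb _) ha hb hab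
    have hcoe : ((a • p + b • q : M) : Fin n → ℝ) = a • (p : Fin n → ℝ) + b • (q : Fin n → ℝ) := by
      push_cast; rfl
    have h2 : vfun h g ((a • p + b • q : M) : Fin n → ℝ)
        ≤ ((a * φ p + b * φ q : ℝ) : EReal) := by rw [hcoe]; exact key
    have h3 := EReal.toReal_le_toReal h2 (hvb _) (EReal.coe_ne_top _)
    rwa [EReal.toReal_coe] at h3
  have hφconv : ConvexOn ℝ domV φ := ⟨hdomV_conv, fun p hp q hq a b ha hb hab => hφle p hp q hq a b ha hb hab⟩
  set D : Set M := interior domV with hDdef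
  have hφcont : ContinuousOn φ D := hφconv.continuousOn_interior
  set Sop : Set (M × ℝ) := {p : M × ℝ | p.1 ∈ D ∧ φ p.1 < p.2} with hSopdef
  have hSop_open : IsOpen Sop := by
    have hco : ContinuousOn (fun p : M × ℝ => p.2 - φ p.1) (D ×ˢ (Set.univ : Set ℝ)) := by
      apply ContinuousOn.sub
      · exact continuous_snd.continuousOn
      · exact hφcont.comp continuous_fst.continuousOn (fun p hp => hp.1)
    have hopen : IsOpen ((D ×ˢ (Set.univ : Set ℝ)) ∩ (fun p : M × ℝ => p.2 - φ p.1) ⁻¹' Set.Ioi 0) :=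
      hco.isOpen_inter_preimage (isOpen_interior.prod isOpen_univ) isOpen_Ioi
    have : Sop = (D ×ˢ (Set.univ : Set ℝ)) ∩ (fun p : M × ℝ => p.2 - φ p.1) ⁻¹' Set.Ioi 0 := by
      ext p
      simp only [hSopdef, Set.mem_setOf_eq, Set.mem_inter_iff, Set.mem_prod, Set.mem_univ,
        and_true, Set.mem_preimage, Set.mem_Ioi, sub_pos]
    rwa [this]
  have hSop_conv : Convex ℝ Sop :=
    (hφconv.subset interior_subset hdomV_conv.interior).convex_strict_epigraph
  have hmem1 : ((0:M), φ 0 + 1) ∈ Sop := ⟨h0int, lt_add_one _⟩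
  have hnot : ((0:M), φ 0) ∉ Sop := fun hc => lt_irrefl _ hc.2
  obtain ⟨f, hf⟩ := geometric_hahn_banach_open_point hSop_conv hSop_open hnot
  set ℓ : M →L[ℝ] ℝ := f.comp (ContinuousLinearMap.inl ℝ M ℝ) with hℓdef
  set c : ℝ := f ((0:M), (1:ℝ)) with hcdef
  have hflin : ∀ (p : M) (t : ℝ), f (p, t) = ℓ p + t * c := by
    intro p t
    have hsplit : ((p, t) : M × ℝ) = (p, (0:ℝ)) + t • ((0:M), (1:ℝ)) := by
      simp [Prod.ext_iff]
    rw [hsplit, map_add, ContinuousLinearMap.map_smul, smul_eq_mul]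
    rfl
  have hc : c < 0 := by
    have := hf _ hmem1
    rw [hflin, hflin] at this
    nlinarith
  have hcpos : 0 < -c := by linarith
  have grad1 : ∀ p ∈ D, ℓ p + φ p * c ≤ φ 0 * c := by
    intro p hp
    apply real_le_of_forall_eps
    intro e he
    have hpe : 0 < e / (-c) := by positivity
    have hmemp : (p, φ p + e / (-c)) ∈ Sop := ⟨hp, by linarith⟩
    have := hf _ hmemp
    rw [hflin, hflin] at this
    have hexp : (φ p + e / (-c)) * c = φ p * c - e := by
      rw [add_mul, div_mul_eq_mul_div, div_neg, mul_div_assoc, div_self hc.ne, mul_one]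
      ring
    rw [hexp] at this
    have hl0 : ℓ (0:M) = 0 := map_zero ℓ
    rw [hl0] at this
    linarith
  have grad2 : ∀ p ∈ domV, φ 0 + ℓ p / (-c) ≤ φ p := by
    intro p hp
    have hmemD : ((1/2 : ℝ)) • (0:M) + ((1/2:ℝ)) • p ∈ interior domV :=
      hdomV_conv.combo_interior_closure_mem_interior h0int (subset_closure hp)
        (by norm_num) (by norm_num) (by norm_num)
    have hA := grad1 _ hmemD
    have hB := hφle 0 h0domV p hp (1/2) (1/2) (by norm_num) (by norm_num) (by norm_num)
    have hl : ℓ ((1/2 : ℝ) • (0:M) + (1/2:ℝ) • p) = (1/2) * ℓ p := by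
      rw [map_add, ContinuousLinearMap.map_smul, ContinuousLinearMap.map_smul, map_zero]
      simp
    rw [hl] at hA
    set m := (1/2 : ℝ) • (0:M) + (1/2:ℝ) • p
    have hkey : ℓ p ≤ (φ p - φ 0) * (-c) := by
      nlinarith [mul_le_mul_of_nonpos_right hB hc.le]
    have h2 : ℓ p / (-c) ≤ φ p - φ 0 := by
      rw [div_le_iff₀ hcpos]; exact hkey
    linarith
  -- extend the functional to the whole space
  obtain ⟨G, hG, -⟩ := exists_extension_norm_eq M ((-c)⁻¹ • ℓ)
  set w : Fin n → ℝ := fun i => G (Pi.single i 1) with hwdef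
  have hGw : ∀ x : Fin n → ℝ, G x = w ⬝ᵥ x := by
    intro x
    have hx : x = ∑ i, x i • (fun j => if i = j then (1:ℝ) else 0) := pi_eq_sum_univ x
    conv_lhs => rw [hx]
    rw [map_sum]
    rw [dotProduct]
    apply Finset.sum_congr rfl
    intro i _
    rw [ContinuousLinearMap.map_smul, smul_eq_mul, mul_comm]
    congr 1
    have : (fun j => if i = j then (1:ℝ) else 0) = Pi.single i 1 := by
      funext j
      simp [Pi.single_apply, eq_comm]
    rw [this]
  refine ⟨w, fun u => ?_⟩
  by_cases huM : u ∈ M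
  · by_cases hut : vfun h g u = ⊤
    · rw [hut]; exact le_top
    · have huS : u ∈ S := (hvS u).1 hut
      have hp : (⟨u, huM⟩ : M) ∈ domV := huS
      have hφu := grad2 _ hp
      have hv0 : vfun h g 0 = ((φ 0 : ℝ) : EReal) := by
        have : ((0:M) : Fin n → ℝ) = 0 := rfl
        rw [hφdef]
        simp only [this]
        exact (EReal.coe_toReal hv0t hv0b).symm
      have hvu : vfun h g u = ((φ ⟨u, huM⟩ : ℝ) : EReal) :=
        (EReal.coe_toReal hut (hvb u)).symm
      have hwu : (w ⬝ᵥ u : ℝ) = ℓ ⟨u, huM⟩ / (-c) := by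
        rw [← hGw u]
        have := hG ⟨u, huM⟩
        rw [show ((⟨u, huM⟩ : M) : Fin n → ℝ) = u from rfl] at this
        rw [this]
        simp [inv_mul_eq_div, div_neg]
      rw [hv0, hvu, hwu, ← EReal.coe_add]
      exact_mod_cast hφu
  · have hut : vfun h g u = ⊤ := by
      by_contra hc'
      exact huM (Submodule.subset_span ((hvS u).1 hc'))
    rw [hut]; exact le_top
end main

section dual
variable {n : ℕ} {h g : (Fin n → ℝ) → EReal}

lemma coe_sub_top' (r : ℝ) : ((r:ℝ) : EReal) - ⊤ = ⊥ := by
  rw [sub_eq_add_neg]; simp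

lemma ereal_coe_sub_ne_top {r : ℝ} {x : EReal} (hx : x ≠ ⊥) : (r : EReal) - x ≠ ⊤ := by
  induction x using EReal.rec with
  | bot => exact absurd rfl hx
  | top => rw [coe_sub_top']; exact bot_ne_top
  | coe s => rw [← EReal.coe_sub]; exact EReal.coe_ne_top _

lemma conj_exists_gt {f : (Fin n → ℝ) → EReal} {w : Fin n → ℝ} {t : EReal}
    (hlt : t < fenchelConj f w) : ∃ x, t < ((w ⬝ᵥ x : ℝ) : EReal) - f x := by
  simp only [fenchelConj] at hlt
  exact lt_iSup_iff.1 hlt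

lemma dual_le_neg_primal (hproper : ProperFn h) (gproper : ProperFn g)
    (w : Fin n → ℝ)
    (hsub : ∀ u : Fin n → ℝ, vfun h g 0 + ((w ⬝ᵥ u : ℝ) : EReal) ≤ vfun h g u)
    (hv0t : vfun h g 0 ≠ ⊤) (hv0b : vfun h g 0 ≠ ⊥) :
    fenchelConj h (-w) + fenchelConj g w ≤ - vfun h g 0 := by
  set r : ℝ := (vfun h g 0).toReal with hrdef
  have hv0 : vfun h g 0 = (r : EReal) := (EReal.coe_toReal hv0t hv0b).symm
  have pair : ∀ x y : Fin n → ℝ,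
      ((((-w) ⬝ᵥ x : ℝ) : EReal) - h x) + (((w ⬝ᵥ y : ℝ) : EReal) - g y) ≤ ((-r : ℝ) : EReal) := by
    intro x y
    by_cases hhx : h x = ⊤
    · rw [hhx, coe_sub_top', EReal.bot_add]; exact bot_le
    by_cases hgy : g y = ⊤
    · rw [hgy, coe_sub_top', EReal.add_bot]; exact bot_le
    have h1 := hsub (y - x)
    have h2 : vfun h g (y - x) ≤ h x + g (x + (y - x)) := iInf_le _ _
    have h3 : x + (y - x) = y := by module
    rw [h3] at h2
    lift h x to ℝ using ⟨hhx, hproper.1 x⟩ with rh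
    lift g y to ℝ using ⟨hgy, gproper.1 y⟩ with rg
    rw [hv0] at h1
    have h4 : ((r + w ⬝ᵥ (y - x) : ℝ) : EReal) ≤ ((rh + rg : ℝ) : EReal) := by
      rw [EReal.coe_add, EReal.coe_add]
      exact le_trans h1 h2
    have h5 : r + w ⬝ᵥ (y - x) ≤ rh + rg := by exact_mod_cast h4
    rw [dotProduct_sub] at h5
    rw [← EReal.coe_sub, ← EReal.coe_sub, ← EReal.coe_add]
    have h6 : (-w) ⬝ᵥ x - rh + (w ⬝ᵥ y - rg) ≤ -r := by
      rw [neg_dotProduct]; linarith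
    exact_mod_cast h6
  have hAb : fenchelConj h (-w) ≠ ⊥ := conj_ne_bot hproper _
  have hBb : fenchelConj g w ≠ ⊥ := conj_ne_bot gproper _
  have hFt : ∀ x, (((-w) ⬝ᵥ x : ℝ) : EReal) - h x ≠ ⊤ := fun x =>
    ereal_coe_sub_ne_top (hproper.1 x)
  have hGt : ∀ y, ((w ⬝ᵥ y : ℝ) : EReal) - g y ≠ ⊤ := fun y =>
    ereal_coe_sub_ne_top (gproper.1 y)
  obtain ⟨x₀, hx₀⟩ := hproper.2
  obtain ⟨y₀, hy₀⟩ := gproper.2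
  have hAt : fenchelConj h (-w) ≠ ⊤ := by
    intro hA
    lift g y₀ to ℝ using ⟨hy₀, gproper.1 y₀⟩ with rg hrg
    have hlt : ((-r - (w ⬝ᵥ y₀ - rg) : ℝ) : EReal) < fenchelConj h (-w) := by
      rw [hA]; exact EReal.coe_lt_top _
    obtain ⟨x, hx⟩ := conj_exists_gt hlt
    lift (((-w) ⬝ᵥ x : ℝ) : EReal) - h x to ℝ using ⟨hFt x, ne_bot_of_gt hx⟩ with s hs
    have hp := pair x y₀
    rw [← hs, ← hrg, ← EReal.coe_sub, ← EReal.coe_add] at hp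
    have hp' : s + (w ⬝ᵥ y₀ - rg) ≤ -r := by exact_mod_cast hp
    have hx' : -r - (w ⬝ᵥ y₀ - rg) < s := by exact_mod_cast hx
    linarith
  have hBt : fenchelConj g w ≠ ⊤ := by
    intro hB
    lift h x₀ to ℝ using ⟨hx₀, hproper.1 x₀⟩ with rh hrh
    have hlt : ((-r - ((-w) ⬝ᵥ x₀ - rh) : ℝ) : EReal) < fenchelConj g w := by
      rw [hB]; exact EReal.coe_lt_top _
    obtain ⟨y, hy⟩ := conj_exists_gt hlt
    lift ((w ⬝ᵥ y : ℝ) : EReal) - g y to ℝ using ⟨hGt y, ne_bot_of_gt hy⟩ with s hs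
    have hp := pair x₀ y
    rw [← hs, ← hrh, ← EReal.coe_sub, ← EReal.coe_add] at hp
    have hp' : ((-w) ⬝ᵥ x₀ - rh) + s ≤ -r := by exact_mod_cast hp
    have hy' : -r - ((-w) ⬝ᵥ x₀ - rh) < s := by exact_mod_cast hy
    linarith
  lift fenchelConj h (-w) to ℝ using ⟨hAt, hAb⟩ with a ha
  lift fenchelConj g w to ℝ using ⟨hBt, hBb⟩ with b hb
  rw [hv0, ← EReal.coe_neg, ← EReal.coe_add]
  have hfinal : a + b ≤ -r := by
    apply real_le_of_forall_eps
    intro e he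
    have hlta : ((a - e/2 : ℝ) : EReal) < fenchelConj h (-w) := by
      rw [← ha]; exact_mod_cast (by linarith : a - e/2 < a)
    obtain ⟨x, hx⟩ := conj_exists_gt hlta
    have hltb : ((b - e/2 : ℝ) : EReal) < fenchelConj g w := by
      rw [← hb]; exact_mod_cast (by linarith : b - e/2 < b)
    obtain ⟨y, hy⟩ := conj_exists_gt hltb
    lift (((-w) ⬝ᵥ x : ℝ) : EReal) - h x to ℝ using ⟨hFt x, ne_bot_of_gt hx⟩ with s hs
    lift ((w ⬝ᵥ y : ℝ) : EReal) - g y to ℝ using ⟨hGt y, ne_bot_of_gt hy⟩ with t ht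
    have hp := pair x y
    rw [← hs, ← ht, ← EReal.coe_add] at hp
    have hp' : s + t ≤ -r := by exact_mod_cast hp
    have hx' : a - e/2 < s := by exact_mod_cast hx
    have hy' : b - e/2 < t := by exact_mod_cast hy
    linarith
  exact_mod_cast hfinal
end dual

/-- Fenchel duality: if `h, g` are proper convex lsc with
`0 ∈ ri(dom g − dom h)`, then `inf_x h(x) + g(x) = −min_w h*(−w) + g*(w)`
(the dual minimum being attained), and if `x*`, `w*` solve the primal and
dual problems then `x* ∈ ∂h*(−w*)` and `w* ∈ ∂g(x*)`. -/
theorem stmt10 {n : ℕ} (h g : (Fin n → ℝ) → EReal)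
    (hproper : ProperFn h) (gproper : ProperFn g)
    (hconv : ConvexFn h) (gconv : ConvexFn g)
    (hlsc : LowerSemicontinuous h) (glsc : LowerSemicontinuous g)
    (hri : (0 : Fin n → ℝ) ∈ intrinsicInterior ℝ (domFn g - domFn h)) :
    (⨅ x : Fin n → ℝ, h x + g x)
        = - (⨅ w : Fin n → ℝ, fenchelConj h (-w) + fenchelConj g w) ∧
    (∃ wstar : Fin n → ℝ, fenchelConj h (-wstar) + fenchelConj g wstar
        = ⨅ w : Fin n → ℝ, fenchelConj h (-w) + fenchelConj g w) ∧
    ∀ xstar wstar : Fin n → ℝ,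
      (h xstar + g xstar = ⨅ x : Fin n → ℝ, h x + g x) →
      (fenchelConj h (-wstar) + fenchelConj g wstar
        = ⨅ w : Fin n → ℝ, fenchelConj h (-w) + fenchelConj g w) →
      xstar ∈ subdiffFn (fenchelConj h) (-wstar) ∧ wstar ∈ subdiffFn g xstar := by
  have hwd := weak_duality hproper gproper (h := h) (g := g)
  by_cases hbot : (⨅ x : Fin n → ℝ, h x + g x) = ⊥
  · -- degenerate case: primal value is ⊥, dual is identically ⊤
    have htop : ∀ w : Fin n → ℝ, fenchelConj h (-w) + fenchelConj g w = ⊤ := by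
      intro w
      have h1 := hwd w
      rw [hbot] at h1
      simp only [EReal.neg_bot, top_le_iff] at h1
      exact h1
    have hdual : (⨅ w : Fin n → ℝ, fenchelConj h (-w) + fenchelConj g w) = ⊤ :=
      iInf_eq_top.2 htop
    refine ⟨by rw [hdual, hbot]; simp, ⟨0, by rw [htop 0, hdual]⟩, ?_⟩
    intro xs ws hxs _
    exfalso
    rw [hbot] at hxs
    exact sum_ne_bot hproper gproper xs xs hxs
  · -- main case
    have hv0b : vfun h g 0 ≠ ⊥ := by rw [v_zero]; exact hbot
    have hv0t : vfun h g 0 ≠ ⊤ := by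
      rw [v_ne_top_iff hproper gproper]
      exact intrinsicInterior_subset hri
    obtain ⟨w, hsub⟩ := exists_subgradient hproper gproper hconv gconv hri hv0b
    have hle : fenchelConj h (-w) + fenchelConj g w ≤ - (⨅ x : Fin n → ℝ, h x + g x) := by
      rw [← v_zero]
      exact dual_le_neg_primal hproper gproper w hsub hv0t hv0b
    have h1 : fenchelConj h (-w) + fenchelConj g w = - (⨅ x : Fin n → ℝ, h x + g x) :=
      le_antisymm hle (hwd w)
    have hdual : (⨅ w' : Fin n → ℝ, fenchelConj h (-w') + fenchelConj g w')
        = - (⨅ x : Fin n → ℝ, h x + g x) :=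
      le_antisymm ((iInf_le _ w).trans hle) (le_iInf hwd)
    refine ⟨by rw [hdual, neg_neg], ⟨w, by rw [h1, hdual]⟩, ?_⟩
    intro xs ws hxs hws
    rw [hdual] at hws
    have hprimal_t : (⨅ x : Fin n → ℝ, h x + g x) ≠ ⊤ := by
      rw [← v_zero]; exact hv0t
    have hsum_t : h xs + g xs ≠ ⊤ := by rw [hxs]; exact hprimal_t
    have hsum_b : h xs + g xs ≠ ⊥ := sum_ne_bot hproper gproper xs xs
    have hhxs_t : h xs ≠ ⊤ := fun ht => hsum_t (by rw [ht, EReal.top_add_of_ne_bot (gproper.1 xs)])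
    have hgxs_t : g xs ≠ ⊤ := fun ht => hsum_t (by rw [ht, EReal.add_top_of_ne_bot (hproper.1 xs)])
    lift h xs to ℝ using ⟨hhxs_t, hproper.1 xs⟩ with rh hrh
    lift g xs to ℝ using ⟨hgxs_t, gproper.1 xs⟩ with rg hrg
    have hws' : fenchelConj h (-ws) + fenchelConj g ws = ((-(rh + rg) : ℝ) : EReal) := by
      rw [hws, ← hxs, ← EReal.coe_add, ← EReal.coe_neg]
    have hAb : fenchelConj h (-ws) ≠ ⊥ := conj_ne_bot hproper _
    have hBb : fenchelConj g ws ≠ ⊥ := conj_ne_bot gproper _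
    have hAt : fenchelConj h (-ws) ≠ ⊤ := by
      intro ht
      rw [ht, EReal.top_add_of_ne_bot hBb] at hws'
      exact EReal.coe_ne_top _ hws'.symm
    have hBt : fenchelConj g ws ≠ ⊤ := by
      intro ht
      rw [ht, EReal.add_top_of_ne_bot hAb] at hws'
      exact EReal.coe_ne_top _ hws'.symm
    lift fenchelConj h (-ws) to ℝ using ⟨hAt, hAb⟩ with a ha
    lift fenchelConj g ws to ℝ using ⟨hBt, hBb⟩ with b hb
    have hab : a + b = -(rh + rg) := by exact_mod_cast hws'
    have hage : ((((-ws) ⬝ᵥ xs : ℝ) : EReal) - (rh : EReal)) ≤ (a : EReal) := by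
      rw [ha, hrh]; exact conj_term_le h (-ws) xs
    have hbge : (((ws ⬝ᵥ xs : ℝ) : EReal) - (rg : EReal)) ≤ (b : EReal) := by
      rw [hb, hrg]; exact conj_term_le g ws xs
    rw [← EReal.coe_sub] at hage hbge
    have hage' : (-ws) ⬝ᵥ xs - rh ≤ a := by exact_mod_cast hage
    have hbge' : ws ⬝ᵥ xs - rg ≤ b := by exact_mod_cast hbge
    have hdot : (-ws) ⬝ᵥ xs = -(ws ⬝ᵥ xs) := by rw [neg_dotProduct]
    have haeq : a = (-ws) ⬝ᵥ xs - rh := by rw [hdot] at hage' ⊢; linarith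
    have hbeq : b = ws ⬝ᵥ xs - rg := by rw [hdot] at hage'; linarith
    constructor
    · intro y
      have hterm : ((y ⬝ᵥ xs : ℝ) : EReal) - (rh : EReal) ≤ fenchelConj h y := by
        rw [hrh]; exact conj_term_le h y xs
      rw [← EReal.coe_sub] at hterm
      refine le_trans (le_of_eq ?_) hterm
      rw [← ha, ← EReal.coe_add]
      congr 1
      rw [haeq, sub_neg_eq_add, dotProduct_add, hdot]
      rw [dotProduct_comm xs y, dotProduct_comm xs ws]
      ring
    · intro y
      by_cases hgy : g y = ⊤
      · rw [hgy]; exact le_top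
      lift g y to ℝ using ⟨hgy, gproper.1 y⟩ with ry hry
      have hterm : ((ws ⬝ᵥ y : ℝ) : EReal) - (ry : EReal) ≤ (b : EReal) := by
        rw [hb, hry]; exact conj_term_le g ws y
      rw [← EReal.coe_sub] at hterm
      have hterm' : ws ⬝ᵥ y - ry ≤ b := by exact_mod_cast hterm
      rw [← hrg, ← EReal.coe_add]
      have hfin : rg + ws ⬝ᵥ (y - xs) ≤ ry := by
        rw [dotProduct_sub]
        rw [hbeq] at hterm'
        linarith
      exact_mod_cast hfin
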